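/- For a consistently connected cyclic system of rank 4 (the EPR–Bohm system) of ±1-valued random variables with product expectations e₁ = ⟨R₁¹R₂¹⟩, e₂ = ⟨R₂²R₃²⟩, e₃ = ⟨R₃³R₄³⟩, e₄ = ⟨R₄⁴R₁⁴⟩, a noncontextual (maximally connected) coupling exists if and only if s_odd(e₁,e₂,e₃,e₄) ≤ 2, where s_odd is the maximum of ±e₁±e₂±e₃±e₄ over sign choices with an odd number of minus signs (the CHSH inequalities). -/

import Mathlib

lemma triple_aux (A0 B0 C0 D0 A1 B1 C1 D1 c : ℝ)
    (hA0 : 0 ≤ A0) (hB0 : 0 ≤ B0) (hC0 : 0 ≤ C0) (hD0 : 0 ≤ D0)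
    (hA1 : 0 ≤ A1) (hB1 : 0 ≤ B1) (hC1 : 0 ≤ C1) (hD1 : 0 ≤ D1)
    (s0 : A0 + B0 + C0 + D0 = 1) (s1 : A1 + B1 + C1 + D1 = 1)
    (hco : A0 + C0 = A1 + B1)
    (hc0 : 0 ≤ c) (hc1 : A0 - B1 ≤ c) (hc2 : B0 - D1 ≤ c)
    (hc3 : (A0 + B0) + (A1 + C1) - 1 ≤ c)
    (hc4 : c ≤ A0 + B0) (hc5 : c ≤ A1 + C1)
    (hc6 : c ≤ B0 + A1) (hc7 : c ≤ C1 + A0) :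
    ∃ t : Bool → Bool → Bool → ℝ, (∀ x y z, 0 ≤ t x y z) ∧
      (t true true true + t true true false = A0) ∧
      (t true false true + t true false false = B0) ∧
      (t false true true + t false true false = C0) ∧
      (t false false true + t false false false = D0) ∧
      (t true true true + t false true true = A1) ∧
      (t true true false + t false true false = B1) ∧
      (t true false true + t false false true = C1) ∧
      (t true false false + t false false false = D1) ∧
      (t true true true + t true false true = c) ∧
      (t true true false + t true false false = A0 + B0 - c) ∧
      (t false true true + t false false true = A1 + C1 - c) ∧
      (t false true false + t false false false = 1 - (A0 + B0) - (A1 + C1) + c) := by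
  set u : ℝ := max (max 0 (c - B0)) (max (A0 - B1) (c - C1)) with hu
  have hu0 : (0:ℝ) ≤ u := le_trans (le_max_left _ _) (le_max_left _ _)
  have hu1 : c - B0 ≤ u := le_trans (le_max_right _ _) (le_max_left _ _)
  have hu2 : A0 - B1 ≤ u := le_trans (le_max_left _ _) (le_max_right _ _)
  have hu3 : c - C1 ≤ u := le_trans (le_max_right _ _) (le_max_right _ _)
  have huA0 : u ≤ A0 := max_le (max_le (by linarith) (by linarith))
    (max_le (by linarith) (by linarith))
  have huA1 : u ≤ A1 := max_le (max_le (by linarith) (by linarith))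
    (max_le (by linarith) (by linarith))
  have huc : u ≤ c := max_le (max_le (by linarith) (by linarith))
    (max_le (by linarith) (by linarith))
  have huD : u ≤ D1 - B0 + c := max_le (max_le (by linarith) (by linarith))
    (max_le (by linarith) (by linarith))
  refine ⟨fun x y z => match x, y, z with
    | true, true, true => u
    | true, true, false => A0 - u
    | true, false, true => c - u
    | true, false, false => B0 - c + u
    | false, true, true => A1 - u
    | false, true, false => B1 - A0 + u
    | false, false, true => C1 - c + u
    | false, false, false => D1 - B0 + c - u, ?_, by ring, by ring,
      by show A1 - u + (B1 - A0 + u) = C0; linarith,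
      by show C1 - c + u + (D1 - B0 + c - u) = D0; linarith,
      by ring, by ring, by ring, by ring, by ring, by ring, by ring,
      by show B1 - A0 + u + (D1 - B0 + c - u) = 1 - (A0 + B0) - (A1 + C1) + c; linarith⟩
  rintro (_|_) (_|_) (_|_) <;> dsimp only <;> linarith

lemma sum_pi4 (g : (Fin 4 → Bool) → ℝ) :
    ∑ x, g x = ∑ p : Bool × Bool × Bool × Bool, g ![p.1, p.2.1, p.2.2.1, p.2.2.2] := by
  apply Fintype.sum_equiv
    ⟨fun x => (x 0, x 1, x 2, x 3), fun p => ![p.1, p.2.1, p.2.2.1, p.2.2.2],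
      fun x => by funext i; fin_cases i <;> rfl, fun p => rfl⟩
  intro x
  exact congrArg g (by funext i; fin_cases i <;> rfl)

lemma key_sum (ν : (Fin 4 → Bool) → ℝ) (μi : Bool × Bool → ℝ) (i : Fin 4)
    (h : ∀ a b : Bool,
      ∑ x ∈ Finset.univ.filter (fun x : Fin 4 → Bool => x i = a ∧ x (i + 1) = b), ν x
        = μi (a, b)) :
    ∑ z : Bool × Bool, (if z.1 then (1 : ℝ) else -1) * (if z.2 then (1 : ℝ) else -1) * μi z
      = ∑ x : Fin 4 → Bool,
        ((if x i then (1 : ℝ) else -1) * (if x (i + 1) then (1 : ℝ) else -1)) * ν x := by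
  rw [← Finset.sum_fiberwise Finset.univ (fun x : Fin 4 → Bool => (x i, x (i + 1)))
    (fun x => ((if x i then (1 : ℝ) else -1) * (if x (i + 1) then (1 : ℝ) else -1)) * ν x)]
  apply Finset.sum_congr rfl
  intro z _
  have hfilter : (Finset.univ.filter (fun x : Fin 4 → Bool => (x i, x (i + 1)) = z))
      = Finset.univ.filter (fun x : Fin 4 → Bool => x i = z.1 ∧ x (i + 1) = z.2) := by
    apply Finset.filter_congr
    intro x _
    simp [Prod.ext_iff]
  rw [hfilter]
  calc (if z.1 then (1:ℝ) else -1) * (if z.2 then (1:ℝ) else -1) * μi z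
      = (if z.1 then (1:ℝ) else -1) * (if z.2 then (1:ℝ) else -1) * μi (z.1, z.2) := by
        rw [Prod.mk.eta]
    _ = (if z.1 then (1:ℝ) else -1) * (if z.2 then (1:ℝ) else -1) *
        ∑ x ∈ Finset.univ.filter (fun x : Fin 4 → Bool => x i = z.1 ∧ x (i + 1) = z.2), ν x := by
        rw [h z.1 z.2]
    _ = _ := by
        rw [Finset.mul_sum]
        apply Finset.sum_congr rfl
        intro x hx
        simp only [Finset.mem_filter] at hx
        rw [hx.2.1, hx.2.2]

lemma chsh_pointwise (ε : Fin 4 → ℝ) (hε : ∀ i, ε i = 1 ∨ ε i = -1)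
    (hp : ∏ i, ε i = -1) (x : Fin 4 → Bool) :
    ∑ i, ε i * ((if x i then (1 : ℝ) else -1) * (if x (i + 1) then (1 : ℝ) else -1)) ≤ 2 := by
  have e0 : (0 : Fin 4) + 1 = 1 := rfl
  have e1 : (1 : Fin 4) + 1 = 2 := rfl
  have e2 : (2 : Fin 4) + 1 = 3 := rfl
  have e3 : (3 : Fin 4) + 1 = 0 := rfl
  rw [Fin.sum_univ_four, e0, e1, e2, e3]
  rw [Fin.prod_univ_four] at hp
  rcases hε 0 with h0 | h0 <;> rcases hε 1 with h1 | h1 <;> rcases hε 2 with h2 | h2 <;>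
    rcases hε 3 with h3 | h3 <;> rw [h0, h1, h2, h3] at hp ⊢ <;>
    (try norm_num at hp) <;>
    (cases hx0 : x 0 <;> cases hx1 : x 1 <;> cases hx2 : x 2 <;> cases hx3 : x 3 <;>
          simp [hx0, hx1, hx2, hx3] <;> norm_num)

set_option maxHeartbeats 4000000 in
theorem stmt13 (μ : Fin 4 → Bool × Bool → ℝ)
    (hpos : ∀ i z, 0 ≤ μ i z) (hsum : ∀ i, ∑ z, μ i z = 1)
    (hcons : ∀ i (v : Bool), ∑ u, μ i (u, v) = ∑ w, μ (i + 1) (v, w)) :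
    (∃ ν : (Fin 4 → Bool) → ℝ, (∀ x, 0 ≤ ν x) ∧ (∑ x, ν x = 1) ∧
      (∀ i (a b : Bool),
        ∑ x ∈ Finset.univ.filter (fun x : Fin 4 → Bool => x i = a ∧ x (i + 1) = b), ν x
          = μ i (a, b))) ↔
    (∀ ε : Fin 4 → ℝ, (∀ i, ε i = 1 ∨ ε i = -1) → (∏ i, ε i) = -1 →
      ∑ i, ε i * (∑ z : Bool × Bool,
        (if z.1 then (1 : ℝ) else -1) * (if z.2 then (1 : ℝ) else -1) * μ i z) ≤ 2) := by
  constructor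
  · rintro ⟨ν, hν0, hνs, hνm⟩ ε hε hεp
    have key := fun i => key_sum ν (μ i) i (hνm i)
    calc ∑ i, ε i * (∑ z : Bool × Bool,
          (if z.1 then (1 : ℝ) else -1) * (if z.2 then (1 : ℝ) else -1) * μ i z)
        = ∑ i, ∑ x : Fin 4 → Bool, ε i *
            (((if x i then (1 : ℝ) else -1) * (if x (i + 1) then (1 : ℝ) else -1)) * ν x) := by
          apply Finset.sum_congr rfl
          intro i _
          rw [key i, Finset.mul_sum]
      _ = ∑ x : Fin 4 → Bool, ∑ i, ε i *
            (((if x i then (1 : ℝ) else -1) * (if x (i + 1) then (1 : ℝ) else -1)) * ν x) :=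
          Finset.sum_comm
      _ = ∑ x : Fin 4 → Bool,
            (∑ i, ε i * ((if x i then (1 : ℝ) else -1) * (if x (i + 1) then (1 : ℝ) else -1)))
              * ν x := by
          apply Finset.sum_congr rfl
          intro x _
          rw [Finset.sum_mul]
          apply Finset.sum_congr rfl
          intro i _
          ring
      _ ≤ ∑ x : Fin 4 → Bool, 2 * ν x := by
          apply Finset.sum_le_sum
          intro x _
          exact mul_le_mul_of_nonneg_right (chsh_pointwise ε hε hεp x) (hν0 x)
      _ = 2 := by rw [← Finset.mul_sum, hνs, mul_one]
  · intro hE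
    have P00 := hpos 0 (true, true); have P01 := hpos 0 (true, false)
    have P02 := hpos 0 (false, true); have P03 := hpos 0 (false, false)
    have P10 := hpos 1 (true, true); have P11 := hpos 1 (true, false)
    have P12 := hpos 1 (false, true); have P13 := hpos 1 (false, false)
    have P20 := hpos 2 (true, true); have P21 := hpos 2 (true, false)
    have P22 := hpos 2 (false, true); have P23 := hpos 2 (false, false)
    have P30 := hpos 3 (true, true); have P31 := hpos 3 (true, false)
    have P32 := hpos 3 (false, true); have P33 := hpos 3 (false, false)
    have hs : ∀ i : Fin 4, μ i (true, true) + μ i (true, false)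
        + μ i (false, true) + μ i (false, false) = 1 := by
      intro i
      have h := hsum i
      rw [Fintype.sum_prod_type] at h
      simp only [Fintype.sum_bool] at h
      linarith
    have hs0 := hs 0; have hs1 := hs 1; have hs2 := hs 2; have hs3 := hs 3
    have hcn : ∀ i : Fin 4, μ i (true, true) + μ i (false, true)
        = μ (i + 1) (true, true) + μ (i + 1) (true, false) := by
      intro i
      have h := hcons i true
      simpa only [Fintype.sum_bool] using h
    have hco0 := hcn 0; have hco1 := hcn 1; have hco2 := hcn 2; have hco3 := hcn 3
    have e01 : (0 : Fin 4) + 1 = 1 := rfl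
    have e12 : (1 : Fin 4) + 1 = 2 := rfl
    have e23 : (2 : Fin 4) + 1 = 3 := rfl
    have e30 : (3 : Fin 4) + 1 = 0 := rfl
    rw [e01] at hco0; rw [e12] at hco1; rw [e23] at hco2; rw [e30] at hco3
    -- the 8 CHSH inequalities in atom form
    have hE' : ∀ a b c d : ℝ, (a = 1 ∨ a = -1) → (b = 1 ∨ b = -1) → (c = 1 ∨ c = -1) →
        (d = 1 ∨ d = -1) → a * b * c * d = -1 →
        a * (μ 0 (true,true) - μ 0 (true,false) - μ 0 (false,true) + μ 0 (false,false))
        + b * (μ 1 (true,true) - μ 1 (true,false) - μ 1 (false,true) + μ 1 (false,false))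
        + c * (μ 2 (true,true) - μ 2 (true,false) - μ 2 (false,true) + μ 2 (false,false))
        + d * (μ 3 (true,true) - μ 3 (true,false) - μ 3 (false,true) + μ 3 (false,false)) ≤ 2 := by
      intro a b c d ha hb hc hd hp
      have h := hE ![a, b, c, d] (by intro i; fin_cases i <;> assumption)
        (by rw [Fin.prod_univ_four]; exact hp)
      rw [Fin.sum_univ_four] at h
      have he : ∀ i : Fin 4, (∑ z : Bool × Bool,
          (if z.1 then (1 : ℝ) else -1) * (if z.2 then (1 : ℝ) else -1) * μ i z)
          = μ i (true,true) - μ i (true,false) - μ i (false,true) + μ i (false,false) := by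
        intro i
        rw [Fintype.sum_prod_type]
        simp only [Fintype.sum_bool]
        norm_num
        ring
      rw [he 0, he 1, he 2, he 3] at h
      have v0 : (![a,b,c,d] : Fin 4 → ℝ) 0 = a := rfl
      have v1 : (![a,b,c,d] : Fin 4 → ℝ) 1 = b := rfl
      have v2 : (![a,b,c,d] : Fin 4 → ℝ) 2 = c := rfl
      have v3 : (![a,b,c,d] : Fin 4 → ℝ) 3 = d := rfl
      rw [v0, v1, v2, v3] at h
      linarith
    have K1 := hE' 1 1 1 (-1) (Or.inl rfl) (Or.inl rfl) (Or.inl rfl) (Or.inr rfl) (by norm_num)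
    have K2 := hE' 1 1 (-1) 1 (Or.inl rfl) (Or.inl rfl) (Or.inr rfl) (Or.inl rfl) (by norm_num)
    have K3 := hE' 1 (-1) 1 1 (Or.inl rfl) (Or.inr rfl) (Or.inl rfl) (Or.inl rfl) (by norm_num)
    have K4 := hE' (-1) 1 1 1 (Or.inr rfl) (Or.inl rfl) (Or.inl rfl) (Or.inl rfl) (by norm_num)
    have K5 := hE' (-1) (-1) (-1) 1 (Or.inr rfl) (Or.inr rfl) (Or.inr rfl) (Or.inl rfl) (by norm_num)
    have K6 := hE' (-1) (-1) 1 (-1) (Or.inr rfl) (Or.inr rfl) (Or.inl rfl) (Or.inr rfl) (by norm_num)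
    have K7 := hE' (-1) 1 (-1) (-1) (Or.inr rfl) (Or.inl rfl) (Or.inr rfl) (Or.inr rfl) (by norm_num)
    have K8 := hE' 1 (-1) (-1) (-1) (Or.inl rfl) (Or.inr rfl) (Or.inr rfl) (Or.inr rfl) (by norm_num)
    -- choose the 0-2 joint probability c
    set c : ℝ := max (max 0 (μ 0 (true,true) + μ 0 (true,false)
        + (μ 1 (true,true) + μ 1 (false,true)) - 1))
      (max (max (μ 0 (true,true) - μ 1 (true,false)) (μ 0 (true,false) - μ 1 (false,false)))
           (max (μ 2 (true,true) - μ 3 (true,false)) (μ 2 (true,false) - μ 3 (false,false))))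
      with hcdef
    have hl1 : (0:ℝ) ≤ c := le_trans (le_max_left _ _) (le_max_left _ _)
    have hl2 : μ 0 (true,true) + μ 0 (true,false) + (μ 1 (true,true) + μ 1 (false,true)) - 1 ≤ c :=
      le_trans (le_max_right _ _) (le_max_left _ _)
    have hl3 : μ 0 (true,true) - μ 1 (true,false) ≤ c :=
      le_trans (le_trans (le_max_left _ _) (le_max_left _ _)) (le_max_right _ _)
    have hl4 : μ 0 (true,false) - μ 1 (false,false) ≤ c :=
      le_trans (le_trans (le_max_right _ _) (le_max_left _ _)) (le_max_right _ _)
    have hl5 : μ 2 (true,true) - μ 3 (true,false) ≤ c :=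
      le_trans (le_trans (le_max_left _ _) (le_max_right _ _)) (le_max_right _ _)
    have hl6 : μ 2 (true,false) - μ 3 (false,false) ≤ c :=
      le_trans (le_trans (le_max_right _ _) (le_max_right _ _)) (le_max_right _ _)
    have hu1 : c ≤ μ 0 (true,true) + μ 0 (true,false) :=
      max_le (max_le (by linarith) (by linarith))
        (max_le (max_le (by linarith) (by linarith)) (max_le (by linarith) (by linarith)))
    have hu2 : c ≤ μ 1 (true,true) + μ 1 (false,true) :=
      max_le (max_le (by linarith) (by linarith))
        (max_le (max_le (by linarith) (by linarith)) (max_le (by linarith) (by linarith)))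
    have hu3 : c ≤ μ 0 (true,false) + μ 1 (true,true) :=
      max_le (max_le (by linarith) (by linarith))
        (max_le (max_le (by linarith) (by linarith)) (max_le (by linarith) (by linarith)))
    have hu4 : c ≤ μ 1 (false,true) + μ 0 (true,true) :=
      max_le (max_le (by linarith) (by linarith))
        (max_le (max_le (by linarith) (by linarith)) (max_le (by linarith) (by linarith)))
    have hu5 : c ≤ μ 2 (true,true) + μ 2 (true,false) :=
      max_le (max_le (by linarith) (by linarith))
        (max_le (max_le (by linarith) (by linarith)) (max_le (by linarith) (by linarith)))
    have hu6 : c ≤ μ 3 (true,true) + μ 3 (false,true) :=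
      max_le (max_le (by linarith) (by linarith))
        (max_le (max_le (by linarith) (by linarith)) (max_le (by linarith) (by linarith)))
    have hu7 : c ≤ μ 2 (true,false) + μ 3 (true,true) :=
      max_le (max_le (by linarith) (by linarith))
        (max_le (max_le (by linarith) (by linarith)) (max_le (by linarith) (by linarith)))
    have hu8 : c ≤ μ 3 (false,true) + μ 2 (true,true) :=
      max_le (max_le (by linarith) (by linarith))
        (max_le (max_le (by linarith) (by linarith)) (max_le (by linarith) (by linarith)))
    obtain ⟨t, tpos, t1, t2, t3, t4, t5, t6, t7, t8, t9, t10, t11, t12⟩ :=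
      triple_aux (μ 0 (true,true)) (μ 0 (true,false)) (μ 0 (false,true)) (μ 0 (false,false))
        (μ 1 (true,true)) (μ 1 (true,false)) (μ 1 (false,true)) (μ 1 (false,false)) c
        P00 P01 P02 P03 P10 P11 P12 P13 hs0 hs1 hco0 hl1 hl3 hl4 (by linarith)
        hu1 hu2 hu3 hu4
    obtain ⟨s, spos, s1, s2, s3, s4, s5, s6, s7, s8, s9, s10, s11, s12⟩ :=
      triple_aux (μ 2 (true,true)) (μ 2 (true,false)) (μ 2 (false,true)) (μ 2 (false,false))
        (μ 3 (true,true)) (μ 3 (true,false)) (μ 3 (false,true)) (μ 3 (false,false)) c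
        P20 P21 P22 P23 P30 P31 P32 P33 hs2 hs3 hco2 hl1 hl5 hl6 (by linarith)
        hu5 hu6 hu7 hu8
    have hrr : ∀ a z : Bool, s z true a + s z false a = t a true z + t a false z := by
      rintro (_|_) (_|_) <;> linarith
    set F : Bool → Bool → Bool → Bool → ℝ := fun a b z d =>
      if t a true z + t a false z = 0 then 0
      else t a b z * s z d a / (t a true z + t a false z) with hF
    have Fpos : ∀ a b z d, 0 ≤ F a b z d := by
      intro a b z d
      rw [hF]
      dsimp only
      split
      · exact le_refl 0
      · exact div_nonneg (mul_nonneg (tpos _ _ _) (spos _ _ _))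
          (add_nonneg (tpos _ _ _) (tpos _ _ _))
    have L1 : ∀ a b z, F a b z true + F a b z false = t a b z := by
      intro a b z
      by_cases h : t a true z + t a false z = 0
      · have hb : t a b z = 0 := by
          have h1 := tpos a true z; have h2 := tpos a false z
          cases b
          · linarith
          · linarith
        rw [hF]; dsimp only; rw [if_pos h, if_pos h, hb]; norm_num
      · rw [hF]; dsimp only
        rw [if_neg h, if_neg h, ← add_div, ← mul_add, hrr a z]
        exact mul_div_cancel_right₀ _ h
    have L2 : ∀ a z d, F a true z d + F a false z d = s z d a := by
      intro a z d
      by_cases h : t a true z + t a false z = 0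
      · have hb : s z d a = 0 := by
          have h1 := spos z true a; have h2 := spos z false a
          have h3 := hrr a z
          cases d
          · linarith
          · linarith
        rw [hF]; dsimp only; rw [if_pos h, if_pos h, hb]; norm_num
      · rw [hF]; dsimp only
        rw [if_neg h, if_neg h, ← add_div, ← add_mul]
        exact mul_div_cancel_left₀ _ h
    refine ⟨fun x => F (x 0) (x 1) (x 2) (x 3), fun x => Fpos _ _ _ _, ?_, ?_⟩
    · rw [sum_pi4 (fun x => F (x 0) (x 1) (x 2) (x 3))]
      simp only [Fintype.sum_prod_type, Fintype.sum_bool, Matrix.cons_val_zero,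
        Matrix.cons_val_one, Matrix.head_cons, Matrix.cons_val_two, Matrix.tail_cons,
        Matrix.cons_val_three]
      linarith [L1 true true true, L1 true true false, L1 true false true, L1 true false false,
        L1 false true true, L1 false true false, L1 false false true, L1 false false false]
    · intro i a b
      have hi : i = 0 ∨ i = 1 ∨ i = 2 ∨ i = 3 := by fin_cases i <;> simp
      rcases hi with rfl | rfl | rfl | rfl <;>
        rw [Finset.sum_filter, sum_pi4] <;>
        cases a <;> cases b <;>
        simp only [e01, e12, e23, e30, Fintype.sum_prod_type, Fintype.sum_bool,
          Matrix.cons_val_zero, Matrix.cons_val_one, Matrix.head_cons, Matrix.cons_val_two,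
          Matrix.tail_cons, Matrix.cons_val_three, if_true, if_false, and_true, and_false,
          true_and, false_and, and_self, if_pos, reduceIte] <;>
        norm_num <;>
        linarith [L1 true true true, L1 true true false, L1 true false true, L1 true false false,
          L1 false true true, L1 false true false, L1 false false true, L1 false false false,
          L2 true true true, L2 true true false, L2 true false true, L2 true false false,
          L2 false true true, L2 false true false, L2 false false true, L2 false false false]
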